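/- Let T₀ ∈ ℝ, T > 0, Δ ∈ (0,T), and let w : ℝ → ℝ be measurable with 0 ≤ w(t) ≤ 1 for t ∈ [T₀, T₀+T−Δ]. Let a ∈ ℂ with a ≠ 0 and ω ∈ ℂ with Im ω ≤ 0; set y₀(t) := a·exp(−iωt) and z := exp(−iωΔ), so |z| ≤ 1 and (S_Δ y₀)(t) = z·y₀(t). Let ρ : ℝ → ℂ be continuous, set y := y₀ + ρ, assume ‖y₀‖_w > 0, and define ε₀ := ‖ρ‖_w/‖y₀‖_w, ε₁ := ‖S_Δ ρ‖_w/‖y₀‖_w, ε := max(ε₀, ε₁). If ε₀ ≤ 1/4, then ⟨y,y⟩_w ≥ (1 − 2ε₀)·‖y₀‖_w² ≥ (1/2)·‖y₀‖_w² > 0, so the estimator ẑ := ⟨S_Δ y, y⟩_w / ⟨y, y⟩_w is well defined, and |ẑ − z| ≤ (ε₀+ε₁)(1+ε₀)/(1−2ε₀). If moreover ε ≤ 1/8, then |ẑ − z| ≤ 3ε and |ẑ| ≤ |z| + 3ε. -/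

import Mathlib

open MeasureTheory

section SRQAux
open Set

noncomputable def SRQJ (w : ℝ → ℝ) (T₀ b : ℝ) (f g : ℝ → ℂ) : ℂ :=
  ∫ t in Ioc T₀ b, (w t : ℂ) * f t * (starRingEnd ℂ) (g t)

variable {T₀ b : ℝ} {w : ℝ → ℝ}

lemma SRQ_intR (hwm : Measurable w) (hw1 : ∀ t ∈ Icc T₀ b, |w t| ≤ 1)
    {h : ℝ → ℝ} (hh : Continuous h) :
    IntegrableOn (fun t => w t * h t) (Ioc T₀ b) := by
  obtain ⟨C, hC⟩ := (isCompact_Icc (a := T₀) (b := b)).exists_bound_of_continuousOn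
    hh.continuousOn
  refine Integrable.mono' (integrable_const C)
    ((hwm.mul hh.measurable).aestronglyMeasurable) ?_
  filter_upwards [ae_restrict_mem measurableSet_Ioc] with t ht
  have h1 := hw1 t (Ioc_subset_Icc_self ht)
  have h2 := hC t (Ioc_subset_Icc_self ht)
  calc ‖w t * h t‖ = |w t| * ‖h t‖ := by rw [norm_mul]; rfl
  _ ≤ 1 * C := mul_le_mul h1 h2 (norm_nonneg _) zero_le_one
  _ = C := one_mul C

lemma SRQ_intC (hwm : Measurable w) (hw1 : ∀ t ∈ Icc T₀ b, |w t| ≤ 1)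
    {f g : ℝ → ℂ} (hf : Continuous f) (hg : Continuous g) :
    IntegrableOn (fun t => (w t : ℂ) * f t * (starRingEnd ℂ) (g t)) (Ioc T₀ b) := by
  obtain ⟨C, hC⟩ := (isCompact_Icc (a := T₀) (b := b)).exists_bound_of_continuousOn
    hf.continuousOn
  obtain ⟨D, hD⟩ := (isCompact_Icc (a := T₀) (b := b)).exists_bound_of_continuousOn
    hg.continuousOn
  refine Integrable.mono' (integrable_const (C * D))
    (((Complex.measurable_ofReal.comp hwm).mul hf.measurable).mul
      (Complex.continuous_conj.comp hg).measurable |>.aestronglyMeasurable) ?_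
  filter_upwards [ae_restrict_mem measurableSet_Ioc] with t ht
  have h1 := hw1 t (Ioc_subset_Icc_self ht)
  have h2 := hC t (Ioc_subset_Icc_self ht)
  have h3 := hD t (Ioc_subset_Icc_self ht)
  have h2' : (0:ℝ) ≤ C := le_trans (norm_nonneg _) h2
  calc ‖(w t : ℂ) * f t * (starRingEnd ℂ) (g t)‖
      = |w t| * (‖f t‖ * ‖g t‖) := by
        simp [norm_mul, Complex.norm_real, Real.norm_eq_abs, mul_assoc]
  _ ≤ 1 * (C * D) := by
        refine mul_le_mul h1 (mul_le_mul h2 h3 (norm_nonneg _) h2') ?_ zero_le_one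
        positivity
  _ = C * D := one_mul _

variable (hwm : Measurable w) (hw0 : ∀ t ∈ Icc T₀ b, 0 ≤ w t)
  (hw1 : ∀ t ∈ Icc T₀ b, |w t| ≤ 1)

include hwm hw1 in
lemma SRQJ_add_left {f g h : ℝ → ℂ} (hf : Continuous f) (hg : Continuous g)
    (hh : Continuous h) :
    SRQJ w T₀ b (fun t => f t + g t) h = SRQJ w T₀ b f h + SRQJ w T₀ b g h := by
  unfold SRQJ
  rw [← integral_add (SRQ_intC hwm hw1 hf hh) (SRQ_intC hwm hw1 hg hh)]
  congr 1; funext t; ring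

include hwm hw1 in
lemma SRQJ_add_right {f g h : ℝ → ℂ} (hf : Continuous f) (hg : Continuous g)
    (hh : Continuous h) :
    SRQJ w T₀ b f (fun t => g t + h t) = SRQJ w T₀ b f g + SRQJ w T₀ b f h := by
  unfold SRQJ
  rw [← integral_add (SRQ_intC hwm hw1 hf hg) (SRQ_intC hwm hw1 hf hh)]
  congr 1; funext t; simp [map_add]; ring

lemma SRQJ_smul_left (c : ℂ) (f g : ℝ → ℂ) :
    SRQJ w T₀ b (fun t => c * f t) g = c * SRQJ w T₀ b f g := by
  unfold SRQJ
  rw [← integral_const_mul]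
  congr 1; funext t; ring

lemma SRQJ_conj (f g : ℝ → ℂ) :
    SRQJ w T₀ b g f = (starRingEnd ℂ) (SRQJ w T₀ b f g) := by
  unfold SRQJ
  rw [← integral_conj]
  congr 1; funext t
  simp [map_mul, Complex.conj_conj, Complex.conj_ofReal]
  ring

include hwm hw1 in
lemma SRQJ_self_re {f : ℝ → ℂ} (hf : Continuous f) :
    (SRQJ w T₀ b f f).re
      = ∫ t in Ioc T₀ b, w t * (‖f t‖ * ‖f t‖) := by
  have h := integral_re (𝕜 := ℂ) (SRQ_intC hwm hw1 hf hf)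
  simp only [RCLike.re_to_complex] at h
  unfold SRQJ
  rw [← h]
  refine integral_congr_ae (Filter.Eventually.of_forall fun t => ?_)
  simp only [mul_assoc, Complex.mul_conj]
  simp [Complex.ofReal_mul, Complex.normSq_eq_norm_sq, sq]

include hwm hw1 in
lemma SRQJ_self_im {f : ℝ → ℂ} (hf : Continuous f) : (SRQJ w T₀ b f f).im = 0 := by
  have h := integral_im (𝕜 := ℂ) (SRQ_intC hwm hw1 hf hf)
  simp only [RCLike.im_to_complex] at h
  unfold SRQJ
  rw [← h]
  refine integral_eq_zero_of_ae (Filter.Eventually.of_forall fun t => ?_)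
  simp only [mul_assoc, Complex.mul_conj]
  simp

include hwm hw0 hw1 in
lemma SRQJ_self_re_nonneg {f : ℝ → ℂ} (hf : Continuous f) :
    0 ≤ (SRQJ w T₀ b f f).re := by
  rw [SRQJ_self_re hwm hw1 hf]
  refine setIntegral_nonneg measurableSet_Ioc fun t ht => ?_
  exact mul_nonneg (hw0 t (Ioc_subset_Icc_self ht))
    (mul_nonneg (norm_nonneg _) (norm_nonneg _))

include hwm hw0 hw1 in
lemma SRQJ_cs {f g : ℝ → ℂ} (hf : Continuous f) (hg : Continuous g) :
    ‖SRQJ w T₀ b f g‖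
      ≤ Real.sqrt (SRQJ w T₀ b f f).re * Real.sqrt (SRQJ w T₀ b g g).re := by
  have intR' : ∀ h : ℝ → ℝ, Continuous h →
      IntegrableOn (fun t => w t * h t) (Ioc T₀ b) := fun h hh => SRQ_intR hwm hw1 hh
  set F : ℝ → ℝ := fun t => ‖f t‖ with hF
  set G : ℝ → ℝ := fun t => ‖g t‖ with hG
  have hFc : Continuous F := continuous_norm.comp hf
  have hGc : Continuous G := continuous_norm.comp hg
  set A : ℝ := ∫ t in Ioc T₀ b, w t * (F t * F t) with hA
  set B : ℝ := ∫ t in Ioc T₀ b, w t * (G t * G t) with hB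
  set C : ℝ := ∫ t in Ioc T₀ b, w t * (F t * G t) with hC
  have hC0 : 0 ≤ C := by
    refine setIntegral_nonneg measurableSet_Ioc fun t ht => ?_
    exact mul_nonneg (hw0 t (Ioc_subset_Icc_self ht))
      (mul_nonneg (norm_nonneg _) (norm_nonneg _))
  have hA0 : 0 ≤ A := by
    refine setIntegral_nonneg measurableSet_Ioc fun t ht => ?_
    exact mul_nonneg (hw0 t (Ioc_subset_Icc_self ht))
      (mul_nonneg (norm_nonneg _) (norm_nonneg _))
  -- step 1 : |J f g| ≤ C
  have h1 : ‖SRQJ w T₀ b f g‖ ≤ C := by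
    unfold SRQJ
    refine le_trans (norm_integral_le_integral_norm _) (le_of_eq ?_)
    refine integral_congr_ae ?_
    filter_upwards [ae_restrict_mem measurableSet_Ioc] with t ht
    have hwt := hw0 t (Ioc_subset_Icc_self ht)
    simp [norm_mul, Complex.norm_real, Real.norm_eq_abs, abs_of_nonneg hwt, mul_assoc, hF, hG]
  -- step 2 : C ^ 2 ≤ A * B
  have key : ∀ s : ℝ, 0 ≤ B * (s * s) + (-2 * C) * s + A := by
    intro s
    have h0 : 0 ≤ ∫ t in Ioc T₀ b, w t * (F t - s * G t) ^ 2 := by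
      refine setIntegral_nonneg measurableSet_Ioc fun t ht => ?_
      exact mul_nonneg (hw0 t (Ioc_subset_Icc_self ht)) (sq_nonneg _)
    have e1 : (fun t => w t * (F t - s * G t) ^ 2)
        = fun t => (w t * (F t * F t)) + ((-2 * s) * (w t * (F t * G t))
            + s ^ 2 * (w t * (G t * G t))) := by
      funext t; ring
    rw [e1, integral_add (intR' (fun t => F t * F t) (hFc.mul hFc)), integral_add
        (((intR' (fun t => F t * G t) (hFc.mul hGc))).const_mul _) ((intR' (fun t => G t * G t) (hGc.mul hGc)).const_mul _),
        MeasureTheory.integral_const_mul, MeasureTheory.integral_const_mul] at h0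
    · nlinarith [h0]
    · exact ((intR' (fun t => F t * G t) (hFc.mul hGc)).const_mul _).add ((intR' (fun t => G t * G t) (hGc.mul hGc)).const_mul _)
  have hd := discrim_le_zero key
  rw [discrim] at hd
  have h2 : C ^ 2 ≤ A * B := by nlinarith [hd]
  -- combine
  have h3 : C ≤ Real.sqrt A * Real.sqrt B := by
    calc C = Real.sqrt (C ^ 2) := (Real.sqrt_sq hC0).symm
    _ ≤ Real.sqrt (A * B) := Real.sqrt_le_sqrt h2
    _ = Real.sqrt A * Real.sqrt B := Real.sqrt_mul hA0 B
  rw [SRQJ_self_re hwm hw1 hf, SRQJ_self_re hwm hw1 hg]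
  exact le_trans h1 h3

end SRQAux
set_option maxHeartbeats 1000000 in
/-- Stability of the weighted shift Rayleigh quotient estimator for a one-mode
exponential signal with a deterministic residual. -/
theorem shift_rayleigh_quotient_stability
    (T₀ T Δ : ℝ) (hT : 0 < T) (hΔ : 0 < Δ) (hΔT : Δ < T)
    (w : ℝ → ℝ) (hwm : Measurable w)
    (hw : ∀ t ∈ Set.Icc T₀ (T₀ + T - Δ), 0 ≤ w t ∧ w t ≤ 1)
    (a ω : ℂ) (ha : a ≠ 0) (hω : ω.im ≤ 0)
    (ρ : ℝ → ℂ) (hρ : Continuous ρ)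
    (y₀ y : ℝ → ℂ)
    (hy₀ : y₀ = fun t : ℝ => a * Complex.exp (-Complex.I * ω * (t : ℂ)))
    (hy : y = fun t : ℝ => y₀ t + ρ t)
    (z : ℂ) (hz : z = Complex.exp (-Complex.I * ω * (Δ : ℂ)))
    (ip : (ℝ → ℂ) → (ℝ → ℂ) → ℂ)
    (hip : ip = fun f g => ∫ t in T₀..(T₀ + T - Δ),
      ((w t : ℂ) * f t * (starRingEnd ℂ) (g t)))
    (nw : (ℝ → ℂ) → ℝ)
    (hnw : nw = fun f => Real.sqrt (ip f f).re)
    (hy₀pos : 0 < nw y₀)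
    (ε₀ ε₁ ε : ℝ)
    (hε₀ : ε₀ = nw ρ / nw y₀)
    (hε₁ : ε₁ = nw (fun t => ρ (t + Δ)) / nw y₀)
    (hε : ε = max ε₀ ε₁)
    (hsmall : ε₀ ≤ 1 / 4) :
    -- derived normalizations: |z| ≤ 1 and the shift eigenvalue relation
    ‖z‖ ≤ 1 ∧ (∀ t : ℝ, y₀ (t + Δ) = z * y₀ t) ∧
    -- denominator lower bounds: the estimator is well defined
    ((1 - 2 * ε₀) * nw y₀ ^ 2 ≤ (ip y y).re ∧
      (1 / 2) * nw y₀ ^ 2 ≤ (1 - 2 * ε₀) * nw y₀ ^ 2 ∧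
      0 < (1 / 2) * nw y₀ ^ 2) ∧
    -- main stability estimate for the shift Rayleigh quotient
    ‖ip (fun t => y (t + Δ)) y / ip y y - z‖
      ≤ (ε₀ + ε₁) * (1 + ε₀) / (1 - 2 * ε₀) ∧
    -- crude bounds under the stronger smallness assumption
    (ε ≤ 1 / 8 →
      ‖ip (fun t => y (t + Δ)) y / ip y y - z‖ ≤ 3 * ε ∧
      ‖ip (fun t => y (t + Δ)) y / ip y y‖ ≤ ‖z‖ + 3 * ε) := by
  set b : ℝ := T₀ + T - Δ with hb
  have hab : T₀ ≤ b := by simp only [hb]; linarith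
  have hw0 : ∀ t ∈ Set.Icc T₀ b, 0 ≤ w t := fun t ht => (hw t ht).1
  have hw1 : ∀ t ∈ Set.Icc T₀ b, |w t| ≤ 1 := fun t ht =>
    abs_le.mpr ⟨by linarith [(hw t ht).1], (hw t ht).2⟩
  have hipJ : ∀ f g, ip f g = SRQJ w T₀ b f g := by
    intro f g; rw [hip]
    exact intervalIntegral.integral_of_le hab
  have hn : ∀ f, nw f = Real.sqrt (SRQJ w T₀ b f f).re := by
    intro f; rw [hnw]; simp only [hipJ]
  -- continuity
  have hy₀c : Continuous y₀ := by
    rw [hy₀]; fun_prop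
  have hyc : Continuous y := by
    rw [hy]; exact hy₀c.add hρ
  set σ : ℝ → ℂ := fun t => ρ (t + Δ) with hσ
  have hσc : Continuous σ := hρ.comp (continuous_id.add continuous_const)
  -- |z| ≤ 1
  have hzre : (-Complex.I * ω * (Δ : ℂ)).re = ω.im * Δ := by
    simp [Complex.mul_re, Complex.mul_im]
  have hz1 : ‖z‖ ≤ 1 := by
    rw [hz, Complex.norm_exp, hzre]
    rw [Real.exp_le_one_iff]
    nlinarith
  -- shift relation
  have hshift : ∀ t : ℝ, y₀ (t + Δ) = z * y₀ t := by
    intro t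
    rw [hy₀, hz]
    simp only
    push_cast
    have e : (-Complex.I * ω * ((t : ℂ) + (Δ : ℂ)))
        = (-Complex.I * ω * (Δ : ℂ)) + (-Complex.I * ω * (t : ℂ)) := by ring
    rw [e, Complex.exp_add]; ring
  -- basic norms
  have hnonneg : ∀ f, 0 ≤ nw f := by intro f; rw [hn]; exact Real.sqrt_nonneg _
  have hsq : ∀ f : ℝ → ℂ, Continuous f → nw f ^ 2 = (SRQJ w T₀ b f f).re := by
    intro f hf
    rw [hn]
    exact Real.sq_sqrt (SRQJ_self_re_nonneg hwm hw0 hw1 hf)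
  have hε₀n : nw ρ = ε₀ * nw y₀ := by
    rw [hε₀]; field_simp
  have hε₁n : nw σ = ε₁ * nw y₀ := by
    rw [hε₁]; field_simp
  have hε₀0 : 0 ≤ ε₀ := by
    rw [hε₀]; exact div_nonneg (hnonneg ρ) (hnonneg y₀)
  have hε₁0 : 0 ≤ ε₁ := by
    rw [hε₁]; exact div_nonneg (hnonneg _) (hnonneg y₀)
  -- Cauchy–Schwarz instances, stated via nw
  have cs : ∀ f g : ℝ → ℂ, Continuous f → Continuous g →
      ‖SRQJ w T₀ b f g‖ ≤ nw f * nw g := by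
    intro f g hf hg
    rw [hn, hn]
    exact SRQJ_cs hwm hw0 hw1 hf hg
  -- generic splittings
  have split_left : ∀ h : ℝ → ℂ, Continuous h →
      SRQJ w T₀ b y h = SRQJ w T₀ b y₀ h + SRQJ w T₀ b ρ h := by
    intro h hh
    have e := SRQJ_add_left hwm hw1 hy₀c hρ hh
    rw [hy]
    exact e
  have split_right : ∀ h : ℝ → ℂ, Continuous h →
      SRQJ w T₀ b h y = SRQJ w T₀ b h y₀ + SRQJ w T₀ b h ρ := by
    intro h hh
    have e := SRQJ_add_right hwm hw1 hh hy₀c hρ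
    rw [hy]
    exact e
  -- denominator expansion
  have hDexp : SRQJ w T₀ b y y
      = SRQJ w T₀ b y₀ y₀ + SRQJ w T₀ b y₀ ρ + (SRQJ w T₀ b ρ y₀ + SRQJ w T₀ b ρ ρ) := by
    rw [split_left y hyc, split_right y₀ hy₀c, split_right ρ hρ]
  have hconj_re : (SRQJ w T₀ b ρ y₀).re = (SRQJ w T₀ b y₀ ρ).re := by
    rw [SRQJ_conj]; simp
  have habs_re : ∀ u : ℂ, -‖u‖ ≤ u.re := by
    intro u
    have := Complex.abs_re_le_norm u
    cases' abs_le.mp this with h _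
    linarith
  have hDre : (1 - 2 * ε₀) * nw y₀ ^ 2 ≤ (ip y y).re := by
    rw [hipJ, hDexp]
    simp only [Complex.add_re]
    have c1 := cs y₀ ρ hy₀c hρ
    have c2 := habs_re (SRQJ w T₀ b y₀ ρ)
    have c3 := SRQJ_self_re_nonneg hwm hw0 hw1 hρ (b := b) (T₀ := T₀)
    have c4 := hsq y₀ hy₀c
    rw [hconj_re]
    nlinarith [hnonneg y₀, hnonneg ρ, hε₀n]
  have hhalf : (1 / 2) * nw y₀ ^ 2 ≤ (1 - 2 * ε₀) * nw y₀ ^ 2 := by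
    nlinarith [sq_nonneg (nw y₀)]
  have hpos : 0 < (1 / 2) * nw y₀ ^ 2 := by positivity
  -- denominator is real and positive
  have hDim : (ip y y).im = 0 := by
    rw [hipJ]; exact SRQJ_self_im hwm hw1 hyc
  have hDrepos : 0 < (ip y y).re := lt_of_lt_of_le (lt_of_lt_of_le hpos hhalf) hDre
  have hDabs : ‖ip y y‖ = (ip y y).re := by
    have : ip y y = ((ip y y).re : ℂ) := Complex.ext rfl (by simp [hDim])
    rw [this]
    simp [Complex.norm_real, Real.norm_eq_abs, abs_of_nonneg hDrepos.le]
  have hDne : ip y y ≠ 0 := by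
    intro h
    rw [h] at hDrepos; simp at hDrepos
  -- numerator algebra
  set Sy : ℝ → ℂ := fun t => y (t + Δ) with hSy
  have hSye : Sy = fun t => z * y₀ t + σ t := by
    funext t
    rw [hSy]; simp only; rw [hy]; simp only
    rw [hshift t]
  have hSyc : Continuous Sy := by rw [hSye]; exact (continuous_const.mul hy₀c).add hσc
  have hNsplit : ip Sy y = z * SRQJ w T₀ b y₀ y + SRQJ w T₀ b σ y := by
    rw [hipJ]
    conv_lhs => rw [hSye]
    have e1 : SRQJ w T₀ b (fun t => z * y₀ t + σ t) y
        = SRQJ w T₀ b (fun t => z * y₀ t) y + SRQJ w T₀ b σ y :=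
      SRQJ_add_left hwm hw1 (continuous_const.mul hy₀c) hσc hyc
    rw [e1, SRQJ_smul_left]
  have hDsplit : ip y y = SRQJ w T₀ b y₀ y + SRQJ w T₀ b ρ y := by
    rw [hipJ]
    exact split_left y hyc
  have hnum : ip Sy y - z * ip y y = SRQJ w T₀ b σ y - z * SRQJ w T₀ b ρ y := by
    rw [hNsplit, hDsplit]; ring
  have hσy : SRQJ w T₀ b σ y = SRQJ w T₀ b σ y₀ + SRQJ w T₀ b σ ρ :=
    split_right σ hσc
  have hρy : SRQJ w T₀ b ρ y = SRQJ w T₀ b ρ y₀ + SRQJ w T₀ b ρ ρ :=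
    split_right ρ hρ
  have hp2 : nw y₀ ^ 2 = nw y₀ * nw y₀ := by ring
  have hnumbound : ‖ip Sy y - z * ip y y‖
      ≤ (ε₀ + ε₁) * (1 + ε₀) * nw y₀ ^ 2 := by
    rw [hnum, hσy, hρy]
    have c1 := cs σ y₀ hσc hy₀c
    have c2 := cs σ ρ hσc hρ
    have c3 := cs ρ y₀ hρ hy₀c
    have c4 := cs ρ ρ hρ hρ
    have hzn : ‖z‖ * (‖SRQJ w T₀ b ρ y₀‖
        + ‖SRQJ w T₀ b ρ ρ‖)
        ≤ ‖SRQJ w T₀ b ρ y₀‖ + ‖SRQJ w T₀ b ρ ρ‖ :=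
      mul_le_of_le_one_left (by positivity) hz1
    have t1 : ‖SRQJ w T₀ b σ y₀ + SRQJ w T₀ b σ ρ
        - z * (SRQJ w T₀ b ρ y₀ + SRQJ w T₀ b ρ ρ)‖
        ≤ ‖SRQJ w T₀ b σ y₀‖ + ‖SRQJ w T₀ b σ ρ‖
          + ‖z‖ * (‖SRQJ w T₀ b ρ y₀‖
            + ‖SRQJ w T₀ b ρ ρ‖) := by
      calc ‖SRQJ w T₀ b σ y₀ + SRQJ w T₀ b σ ρ
          - z * (SRQJ w T₀ b ρ y₀ + SRQJ w T₀ b ρ ρ)‖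
          ≤ ‖SRQJ w T₀ b σ y₀ + SRQJ w T₀ b σ ρ‖
            + ‖z * (SRQJ w T₀ b ρ y₀ + SRQJ w T₀ b ρ ρ)‖ := norm_sub_le _ _
        _ ≤ (‖SRQJ w T₀ b σ y₀‖ + ‖SRQJ w T₀ b σ ρ‖)
            + ‖z‖ * (‖SRQJ w T₀ b ρ y₀‖ + ‖SRQJ w T₀ b ρ ρ‖) := by
            rw [norm_mul]
            gcongr <;> exact norm_add_le _ _
        _ = _ := by ring
    rw [hε₁n, hε₀n] at c2
    rw [hε₁n] at c1
    rw [hε₀n] at c3 c4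
    nlinarith [t1, c1, c2, c3, c4, hzn, hnonneg y₀, norm_nonneg (SRQJ w T₀ b ρ y₀),
      norm_nonneg (SRQJ w T₀ b ρ ρ)]
  have h12 : 0 < 1 - 2 * ε₀ := by linarith
  have hn02 : 0 < nw y₀ ^ 2 := by positivity
  have hq : ip Sy y / ip y y - z = (ip Sy y - z * ip y y) / ip y y := by
    field_simp
  have hmain : ‖ip Sy y / ip y y - z‖
      ≤ (ε₀ + ε₁) * (1 + ε₀) / (1 - 2 * ε₀) := by
    rw [hq, norm_div, hDabs]
    have step : ‖ip Sy y - z * ip y y‖ / (ip y y).re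
        ≤ ((ε₀ + ε₁) * (1 + ε₀) * nw y₀ ^ 2) / ((1 - 2 * ε₀) * nw y₀ ^ 2) := by
      refine div_le_div₀ (by positivity) hnumbound (by positivity) hDre
    refine le_trans step (le_of_eq ?_)
    rw [mul_div_mul_right _ _ (ne_of_gt hn02)]
  refine ⟨hz1, hshift, ⟨hDre, hhalf, hpos⟩, hmain, fun h8 => ?_⟩
  have hε₀ε : ε₀ ≤ ε := by rw [hε]; exact le_max_left _ _
  have hε₁ε : ε₁ ≤ ε := by rw [hε]; exact le_max_right _ _
  have hεnn : 0 ≤ ε := le_trans hε₀0 hε₀ε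
  have hε₀8 : ε₀ ≤ 1 / 8 := le_trans hε₀ε h8
  have h3e : (ε₀ + ε₁) * (1 + ε₀) / (1 - 2 * ε₀) ≤ 3 * ε := by
    rw [div_le_iff₀ h12]
    nlinarith [mul_nonneg hεnn (show (0:ℝ) ≤ 1 - 8 * ε₀ by linarith),
      mul_nonneg hε₀0 (sub_nonneg.mpr hε₀ε), mul_nonneg hε₀0 (sub_nonneg.mpr hε₁ε),
      mul_nonneg hε₀0 hε₀0]
  have hcrude1 : ‖ip Sy y / ip y y - z‖ ≤ 3 * ε := le_trans hmain h3e
  refine ⟨hcrude1, ?_⟩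
  have tri := norm_add_le (ip Sy y / ip y y - z) z
  rw [sub_add_cancel] at tri
  linarith
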